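/- Let (Ŝ, B̂) be any solution of the dirty-model program, and suppose λ_b/λ_s is not an integer. Then every row of Ŝ has strictly fewer than λ_b/λ_s nonzero entries (i.e., ‖ŝ_j‖₀ < λ_b/λ_s for all j), and for every j ∈ RowSupp(B̂) the set M_j(B̂) has strictly more than λ_b/λ_s elements. -/

import Mathlib

open scoped BigOperators Classical

noncomputable section

/-- The objective of the dirty-model program:
`(1/(2n)) Σ_k ‖y^(k) − X^(k)(s^(k) + b^(k))‖₂² + λ_s ‖S‖_{1,1} + λ_b ‖B‖_{1,∞}`. -/
def dirtyObj (n p r : ℕ) (X : Fin r → Matrix (Fin n) (Fin p) ℝ)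
    (y : Fin r → Fin n → ℝ) (lamS lamB : ℝ)
    (S B : Matrix (Fin p) (Fin r) ℝ) : ℝ :=
  (1 / (2 * (n : ℝ))) *
      ∑ k, ∑ i, (y k i - ∑ j, X k i j * (S j k + B j k)) ^ 2
    + lamS * (∑ j, ∑ k, |S j k|)
    + lamB * (∑ j, ⨆ k, |B j k|)

/-- `(Ŝ, B̂)` is a solution (global minimizer) of the dirty-model program. -/
def IsDirtySol (n p r : ℕ) (X : Fin r → Matrix (Fin n) (Fin p) ℝ)
    (y : Fin r → Fin n → ℝ) (lamS lamB : ℝ)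
    (Shat Bhat : Matrix (Fin p) (Fin r) ℝ) : Prop :=
  ∀ S B : Matrix (Fin p) (Fin r) ℝ,
    dirtyObj n p r X y lamS lamB Shat Bhat ≤ dirtyObj n p r X y lamS lamB S B

/-- `M_j(M)`: the set of column indices attaining the (positive) maximum magnitude
in row `j` of `M`. -/
def maxMagSet {p r : ℕ} (M : Matrix (Fin p) (Fin r) ℝ) (j : Fin p) : Finset (Fin r) :=
  Finset.univ.filter fun k => |M j k| = (⨆ l, |M j l|) ∧ 0 < |M j k|

/-- For any solution `(Ŝ, B̂)` of the dirty-model program, if `λ_b/λ_s`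
is not an integer, then every row of `Ŝ` has strictly fewer than `λ_b/λ_s` nonzero
entries, and for every row `j` in the row-support of `B̂`, the set `M_j(B̂)` has
strictly more than `λ_b/λ_s` elements. -/
lemma row_min {n p r : ℕ} {X : Fin r → Matrix (Fin n) (Fin p) ℝ}
    {y : Fin r → Fin n → ℝ} {lamS lamB : ℝ}
    {Shat Bhat : Matrix (Fin p) (Fin r) ℝ}
    (hsol : IsDirtySol n p r X y lamS lamB Shat Bhat)
    (j : Fin p) (s b : Fin r → ℝ) (hsb : ∀ k, s k + b k = Shat j k + Bhat j k) :
    lamS * (∑ k, |Shat j k|) + lamB * (⨆ k, |Bhat j k|)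
      ≤ lamS * (∑ k, |s k|) + lamB * (⨆ k, |b k|) := by
  have h := hsol (Function.update Shat j s) (Function.update Bhat j b)
  unfold dirtyObj at h
  set S' := Function.update Shat j s with hS'def
  set B' := Function.update Bhat j b with hB'def
  have hloss : ∑ k, ∑ i, (y k i - ∑ j', X k i j' * (S' j' k + B' j' k)) ^ 2
      = ∑ k, ∑ i, (y k i - ∑ j', X k i j' * (Shat j' k + Bhat j' k)) ^ 2 := by
    refine Finset.sum_congr rfl fun k _ => Finset.sum_congr rfl fun i _ => ?_
    congr 1
    congr 1
    refine Finset.sum_congr rfl fun j' _ => ?_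
    by_cases hj : j' = j
    · subst hj
      have hS1 : S' j' k = s k := by simp [hS'def, Function.update]
      have hB1 : B' j' k = b k := by simp [hB'def, Function.update]
      rw [hS1, hB1, hsb k]
    · simp [hS'def, hB'def, Function.update, hj]
  have e1 : ∑ j', ∑ k, |S' j' k|
      = (∑ k, |s k|) + ∑ j' ∈ Finset.univ.erase j, ∑ k, |Shat j' k| := by
    rw [← Finset.add_sum_erase _ _ (Finset.mem_univ j)]
    congr 1
    · simp [hS'def, Function.update]
    · refine Finset.sum_congr rfl fun j' hj' => ?_
      have hne : j' ≠ j := (Finset.mem_erase.mp hj').1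
      simp [hS'def, Function.update, hne]
  have e2 : ∑ j', ∑ k, |Shat j' k|
      = (∑ k, |Shat j k|) + ∑ j' ∈ Finset.univ.erase j, ∑ k, |Shat j' k| :=
    (Finset.add_sum_erase _ _ (Finset.mem_univ j)).symm
  have e3 : ∑ j', (⨆ k, |B' j' k|)
      = (⨆ k, |b k|) + ∑ j' ∈ Finset.univ.erase j, ⨆ k, |Bhat j' k| := by
    rw [← Finset.add_sum_erase _ _ (Finset.mem_univ j)]
    congr 1
    · simp [hB'def, Function.update]
    · refine Finset.sum_congr rfl fun j' hj' => ?_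
      have hne : j' ≠ j := (Finset.mem_erase.mp hj').1
      simp [hB'def, Function.update, hne]
  have e4 : ∑ j', (⨆ k, |Bhat j' k|)
      = (⨆ k, |Bhat j k|) + ∑ j' ∈ Finset.univ.erase j, ⨆ k, |Bhat j' k| :=
    (Finset.add_sum_erase _ _ (Finset.mem_univ j)).symm
  rw [hloss, e1, e3, e2, e4] at h
  linarith

lemma abs_sub_sign_mul {x ε : ℝ} (hx : x ≠ 0) (hεx : ε ≤ |x|) :
    |x - ε * Real.sign x| = |x| - ε := by
  rcases hx.lt_or_gt with h | h
  · rw [Real.sign_of_neg h]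
    rw [abs_of_neg h] at hεx ⊢
    rw [abs_of_nonpos (by linarith)]
    ring
  · rw [Real.sign_of_pos h]
    rw [abs_of_pos h] at hεx ⊢
    rw [abs_of_nonneg (by linarith)]
    ring

lemma abs_mul_sign' {x ε : ℝ} (hx : x ≠ 0) (hε : 0 ≤ ε) :
    |ε * Real.sign x| = ε := by
  rcases hx.lt_or_gt with h | h
  · rw [Real.sign_of_neg h]; rw [abs_of_nonpos (by linarith)]; ring
  · rw [Real.sign_of_pos h]; rw [abs_of_nonneg (by linarith)]; ring

lemma part1_key {n p r : ℕ} (hr : 1 ≤ r) {X : Fin r → Matrix (Fin n) (Fin p) ℝ}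
    {y : Fin r → Fin n → ℝ} {lamS lamB : ℝ} (hlamS : 0 < lamS) (hlamB : 0 < lamB)
    {Shat Bhat : Matrix (Fin p) (Fin r) ℝ}
    (hsol : IsDirtySol n p r X y lamS lamB Shat Bhat) (j : Fin p) :
    ((Finset.univ.filter fun k => Shat j k ≠ 0).card : ℝ) * lamS ≤ lamB := by
  haveI : Nonempty (Fin r) := ⟨⟨0, hr⟩⟩
  set T := Finset.univ.filter fun k => Shat j k ≠ 0 with hT
  rcases T.eq_empty_or_nonempty with hTe | hTne
  · rw [hTe]; simp; positivity
  set ε := T.inf' hTne fun k => |Shat j k| with hε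
  have hε0 : 0 < ε := by
    rw [hε, Finset.lt_inf'_iff]
    intro k hk
    have : Shat j k ≠ 0 := by simpa [hT] using hk
    exact abs_pos.mpr this
  have hεle : ∀ k ∈ T, ε ≤ |Shat j k| := fun k hk => Finset.inf'_le _ hk
  set s : Fin r → ℝ := fun k => if Shat j k = 0 then 0 else Shat j k - ε * Real.sign (Shat j k)
    with hs
  set b : Fin r → ℝ := fun k => Bhat j k + (Shat j k - s k) with hb
  have hsb : ∀ k, s k + b k = Shat j k + Bhat j k := by intro k; rw [hb]; ring
  have hmain := row_min hsol j s b hsb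
  have hsum : ∑ k, |s k| = (∑ k, |Shat j k|) - T.card * ε := by
    have hpt : ∀ k, |s k| = |Shat j k| - (if Shat j k ≠ 0 then ε else 0) := by
      intro k
      by_cases hk : Shat j k = 0
      · simp [hs, hk]
      · have : k ∈ T := by simp [hT, hk]
        simp only [hs, hk, if_neg hk, if_pos hk, ite_not]
        rw [abs_sub_sign_mul hk (hεle k this)]
    rw [Finset.sum_congr rfl fun k _ => hpt k, Finset.sum_sub_distrib]
    congr 1
    rw [← Finset.sum_filter, ← hT, Finset.sum_const, nsmul_eq_mul]
  have hbd : ∀ k, |b k| ≤ (⨆ l, |Bhat j l|) + ε := by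
    intro k
    have h1 : |Bhat j k| ≤ ⨆ l, |Bhat j l| :=
      le_ciSup (Finite.bddAbove_range fun l => |Bhat j l|) k
    have h2 : |Shat j k - s k| ≤ ε := by
      by_cases hk : Shat j k = 0
      · simp [hs, hk]; linarith
      · simp only [hs, if_neg hk]
        have : Shat j k - (Shat j k - ε * Real.sign (Shat j k)) = ε * Real.sign (Shat j k) := by
          ring
        rw [this, abs_mul_sign' hk hε0.le]
    calc |b k| ≤ |Bhat j k| + |Shat j k - s k| := by rw [hb]; exact abs_add_le _ _
    _ ≤ (⨆ l, |Bhat j l|) + ε := add_le_add h1 h2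
  have hsup : (⨆ k, |b k|) ≤ (⨆ l, |Bhat j l|) + ε := ciSup_le hbd
  have hfin : lamS * ((T.card : ℝ) * ε) ≤ lamB * ε := by
    have h3 : lamB * (⨆ k, |b k|) ≤ lamB * ((⨆ l, |Bhat j l|) + ε) :=
      mul_le_mul_of_nonneg_left hsup hlamB.le
    rw [hsum] at hmain
    nlinarith
  have := (mul_le_mul_iff_left₀ hε0).mp (by linarith : (T.card : ℝ) * lamS * ε ≤ lamB * ε)
  exact this

lemma part2_key {n p r : ℕ} (hr : 1 ≤ r) {X : Fin r → Matrix (Fin n) (Fin p) ℝ}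
    {y : Fin r → Fin n → ℝ} {lamS lamB : ℝ} (hlamS : 0 < lamS) (hlamB : 0 < lamB)
    {Shat Bhat : Matrix (Fin p) (Fin r) ℝ}
    (hsol : IsDirtySol n p r X y lamS lamB Shat Bhat) (j : Fin p)
    (hnz : ∃ k, Bhat j k ≠ 0) :
    lamB ≤ ((maxMagSet Bhat j).card : ℝ) * lamS := by
  haveI : Nonempty (Fin r) := ⟨⟨0, hr⟩⟩
  set t := ⨆ l, |Bhat j l| with htdef
  have hlet : ∀ k, |Bhat j k| ≤ t := fun k =>
    le_ciSup (Finite.bddAbove_range fun l => |Bhat j l|) k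
  obtain ⟨k0, hk0⟩ := hnz
  have ht : 0 < t := lt_of_lt_of_le (abs_pos.mpr hk0) (hlet k0)
  have hmem : ∀ k : Fin r, k ∈ maxMagSet Bhat j ↔ |Bhat j k| = t := by
    intro k
    simp only [maxMagSet, Finset.mem_filter, Finset.mem_univ, true_and, ← htdef]
    exact ⟨fun h => h.1, fun h => ⟨h, h ▸ ht⟩⟩
  set M := maxMagSet Bhat j with hM
  have hlt : ∀ k ∉ M, |Bhat j k| < t := by
    intro k hk
    exact lt_of_le_of_ne (hlet k) (fun h => hk ((hmem k).mpr h))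
  obtain ⟨ε, hε0, hεt, hεN⟩ :
      ∃ ε : ℝ, 0 < ε ∧ ε ≤ t ∧ ∀ k ∉ M, |Bhat j k| ≤ t - ε := by
    by_cases hN : (Finset.univ \ M).Nonempty
    · refine ⟨min t (t - (Finset.univ \ M).sup' hN fun k => |Bhat j k|), ?_,
        min_le_left _ _, ?_⟩
      · refine lt_min ht ?_
        have : ((Finset.univ \ M).sup' hN fun k => |Bhat j k|) < t := by
          rw [Finset.sup'_lt_iff]
          intro k hk
          exact hlt k (by simpa using (Finset.mem_sdiff.mp hk).2)
        linarith
      · intro k hk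
        have hk' : k ∈ Finset.univ \ M := Finset.mem_sdiff.mpr ⟨Finset.mem_univ k, hk⟩
        have h1 : |Bhat j k| ≤ (Finset.univ \ M).sup' hN fun k => |Bhat j k| :=
          Finset.le_sup' (fun k => |Bhat j k|) hk'
        have h2 : min t (t - (Finset.univ \ M).sup' hN fun k => |Bhat j k|)
            ≤ t - (Finset.univ \ M).sup' hN fun k => |Bhat j k| := min_le_right _ _
        linarith
    · refine ⟨t, ht, le_refl t, fun k hk => absurd (Finset.mem_sdiff.mpr ⟨Finset.mem_univ k, hk⟩) ?_⟩
      rw [Finset.not_nonempty_iff_eq_empty.mp hN]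
      exact Finset.notMem_empty k
  set b : Fin r → ℝ := fun k =>
    if k ∈ M then Bhat j k - ε * Real.sign (Bhat j k) else Bhat j k with hb
  set s : Fin r → ℝ := fun k => Shat j k + (Bhat j k - b k) with hs
  have hsb : ∀ k, s k + b k = Shat j k + Bhat j k := by intro k; rw [hs]; ring
  have hmain := row_min hsol j s b hsb
  have hbbd : ∀ k, |b k| ≤ t - ε := by
    intro k
    by_cases hk : k ∈ M
    · have heq : |Bhat j k| = t := (hmem k).mp hk
      have hne : Bhat j k ≠ 0 := by
        intro h; rw [h] at heq; simp at heq; linarith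
      simp only [hb, if_pos hk]
      rw [abs_sub_sign_mul hne (heq ▸ hεt), heq]
    · simp only [hb, if_neg hk]
      exact hεN k hk
  have hsup : (⨆ k, |b k|) ≤ t - ε := ciSup_le hbbd
  have hsum : ∑ k, |s k| ≤ (∑ k, |Shat j k|) + M.card * ε := by
    have hpt : ∀ k, |s k| ≤ |Shat j k| + (if k ∈ M then ε else 0) := by
      intro k
      refine le_trans (abs_add_le _ _) (add_le_add_right ?_ _)
      by_cases hk : k ∈ M
      · have heq : |Bhat j k| = t := (hmem k).mp hk
        have hne : Bhat j k ≠ 0 := by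
          intro h; rw [h] at heq; simp at heq; linarith
        simp only [hb, if_pos hk]
        have : Bhat j k - (Bhat j k - ε * Real.sign (Bhat j k))
            = ε * Real.sign (Bhat j k) := by ring
        rw [this, abs_mul_sign' hne hε0.le]
      · simp [hb, if_neg hk]
    calc ∑ k, |s k| ≤ ∑ k, (|Shat j k| + (if k ∈ M then ε else 0)) :=
          Finset.sum_le_sum fun k _ => hpt k
    _ = (∑ k, |Shat j k|) + M.card * ε := by
        rw [Finset.sum_add_distrib]
        congr 1
        rw [Finset.sum_ite_mem, Finset.univ_inter, Finset.sum_const, nsmul_eq_mul]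
  have hfin : lamB * ε ≤ lamS * ((M.card : ℝ) * ε) := by
    have h1 : lamS * (∑ k, |s k|) ≤ lamS * ((∑ k, |Shat j k|) + M.card * ε) :=
      mul_le_mul_of_nonneg_left hsum hlamS.le
    have h2 : lamB * (⨆ k, |b k|) ≤ lamB * (t - ε) :=
      mul_le_mul_of_nonneg_left hsup hlamB.le
    nlinarith
  have := (mul_le_mul_iff_left₀ hε0).mp (by linarith : lamB * ε ≤ (M.card : ℝ) * lamS * ε)
  exact this

theorem dirty_model_row_card_bounds
    (n p r : ℕ) (hn : 1 ≤ n) (hp : 1 ≤ p) (hr : 1 ≤ r)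
    (X : Fin r → Matrix (Fin n) (Fin p) ℝ) (y : Fin r → Fin n → ℝ)
    (lamS lamB : ℝ) (hlamS : 0 < lamS) (hlamB : 0 < lamB)
    (hnotint : ¬ ∃ m : ℤ, lamB / lamS = (m : ℝ))
    (Shat Bhat : Matrix (Fin p) (Fin r) ℝ)
    (hsol : IsDirtySol n p r X y lamS lamB Shat Bhat) :
    (∀ j : Fin p,
      ((Finset.univ.filter fun k => Shat j k ≠ 0).card : ℝ) < lamB / lamS) ∧
    (∀ j : Fin p, (∃ k, Bhat j k ≠ 0) →
      lamB / lamS < (maxMagSet Bhat j).card) := by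
  constructor
  · intro j
    have h := part1_key hr hlamS hlamB hsol j
    have hle : ((Finset.univ.filter fun k => Shat j k ≠ 0).card : ℝ) ≤ lamB / lamS :=
      (le_div_iff₀ hlamS).mpr h
    refine lt_of_le_of_ne hle fun heq => hnotint ?_
    exact ⟨((Finset.univ.filter fun k => Shat j k ≠ 0).card : ℤ), by push_cast; rw [← heq]⟩
  · intro j hnz
    have h := part2_key hr hlamS hlamB hsol j hnz
    have hle : lamB / lamS ≤ ((maxMagSet Bhat j).card : ℝ) :=
      (div_le_iff₀ hlamS).mpr h
    refine lt_of_le_of_ne hle fun heq => hnotint ?_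
    exact ⟨((maxMagSet Bhat j).card : ℤ), by push_cast; rw [heq]⟩
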